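/- For P, σ_ν² > 0 and σ > 0, the function f(ω) = (P + σ_ν² − P·e^{−2ωσ})/(2Pω²e^{−2ωσ}) on (0,∞) attains its minimum at ω* = (2 + W(−2P/(e²(P + σ_ν²))))/(2σ), where W is the principal branch of the Lambert W function. -/

import Mathlib

open Real

lemma key_ineq (c : ℝ) (hc : 1 ≤ c) (h2 : 2 - c ≤ 2 * Real.exp (-c)) :
    ∀ s : ℝ, -c ≤ s → s ^ 2 ≤ 2 * c * (Real.exp s - 1 - s) := by
  have hc0 : 0 < c := lt_of_lt_of_le one_pos hc
  set g : ℝ → ℝ := fun s => 2 * c * (Real.exp s - 1 - s) - s ^ 2 with hg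
  have hderiv : ∀ s : ℝ, HasDerivAt g (2 * c * (Real.exp s - 1) - 2 * s) s := by
    intro s
    have h1 : HasDerivAt (fun s : ℝ => Real.exp s - 1 - s) (Real.exp s - 1) s := by
      simpa using ((Real.hasDerivAt_exp s).sub_const 1).fun_sub (hasDerivAt_id s)
    have h2' : HasDerivAt (fun s : ℝ => s ^ 2) (2 * s) s := by
      simpa using hasDerivAt_pow 2 s
    simpa using (h1.const_mul (2 * c)).fun_sub h2'
  have hderiv_eq : deriv g = fun s => 2 * c * (Real.exp s - 1) - 2 * s := by
    funext s; exact (hderiv s).deriv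
  have hderiv2 : ∀ s : ℝ, HasDerivAt (deriv g) (2 * c * Real.exp s - 2) s := by
    intro s
    rw [hderiv_eq]
    have h1 : HasDerivAt (fun s : ℝ => Real.exp s - 1) (Real.exp s) s := by
      simpa using (Real.hasDerivAt_exp s).sub_const 1
    simpa [mul_comm] using (h1.const_mul (2 * c)).fun_sub ((hasDerivAt_id s).const_mul 2)
  -- value at 0 and at -c
  have hg0 : g 0 = 0 := by simp [hg]
  have hgc : 0 ≤ g (-c) := by
    have : g (-c) = c * (2 * Real.exp (-c) - (2 - c)) := by simp [hg]; ring
    rw [this]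
    exact mul_nonneg hc0.le (by linarith)
  -- case s ≥ 0
  have case_pos : ∀ s : ℝ, 0 ≤ s → 0 ≤ g s := by
    intro s hs
    have hq := Real.quadratic_le_exp_of_nonneg hs
    have := sq_nonneg s
    simp only [hg]
    nlinarith
  -- antitone on [-log c, 0]
  have hanti : AntitoneOn g (Set.Icc (-Real.log c) 0) := by
    apply antitoneOn_of_deriv_nonpos (convex_Icc _ _)
    · exact (Continuous.continuousOn (by continuity))
    · intro x _; exact (hderiv x).differentiableAt.differentiableWithinAt
    · intro x hx
      rw [interior_Icc] at hx
      rw [(hderiv x).deriv]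
      have hx1 : -Real.log c < x := hx.1
      have hx2 : x < 0 := hx.2
      have hce : 1 ≤ c * Real.exp x := by
        have : Real.exp (-Real.log c) ≤ Real.exp x := Real.exp_le_exp.mpr hx1.le
        rw [Real.exp_neg, Real.exp_log hc0] at this
        calc (1:ℝ) = c * c⁻¹ := by field_simp
        _ ≤ c * Real.exp x := by apply mul_le_mul_of_nonneg_left this hc0.le
      have he := Real.add_one_le_exp (-x)
      have hex : 0 < Real.exp x := Real.exp_pos x
      have hprod : Real.exp (-x) * Real.exp x = 1 := by
        rw [← Real.exp_add]; simp
      nlinarith [mul_le_mul_of_nonneg_right he hex.le]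
  have hmidnn : ∀ s : ℝ, -Real.log c ≤ s → s ≤ 0 → 0 ≤ g s := by
    intro s h1 h2'
    have := hanti (Set.mem_Icc.mpr ⟨h1, h2'⟩) (Set.mem_Icc.mpr ⟨by
      have := Real.log_nonneg hc; linarith, le_refl 0⟩) h2'
    rw [hg0] at this; linarith
  -- concave on [-c, -log c]
  have hlogc : Real.log c ≤ c := (Real.log_le_sub_one_of_pos hc0).trans (by linarith)
  have hconc : ConcaveOn ℝ (Set.Icc (-c) (-Real.log c)) g := by
    apply concaveOn_of_deriv2_nonpos (convex_Icc _ _)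
    · exact (Continuous.continuousOn (by continuity))
    · intro x _; exact (hderiv x).differentiableAt.differentiableWithinAt
    · intro x _; exact (hderiv2 x).differentiableAt.differentiableWithinAt
    · intro x hx
      rw [interior_Icc] at hx
      have : deriv^[2] g x = 2 * c * Real.exp x - 2 := by
        simp only [Function.iterate_succ, Function.iterate_zero, Function.comp_apply, id]
        exact (hderiv2 x).deriv
      rw [this]
      have hx2 : x < -Real.log c := hx.2
      have : Real.exp x ≤ Real.exp (-Real.log c) := Real.exp_le_exp.mpr hx2.le
      rw [Real.exp_neg, Real.exp_log hc0] at this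
      have : c * Real.exp x ≤ 1 := by
        calc c * Real.exp x ≤ c * c⁻¹ := mul_le_mul_of_nonneg_left this hc0.le
        _ = 1 := by field_simp
      linarith
  intro s hs
  rcases le_or_gt 0 s with h | h
  · have := case_pos s h; simp only [hg] at this; linarith
  rcases le_or_gt (-Real.log c) s with h' | h'
  · have := hmidnn s h' h.le; simp only [hg] at this; linarith
  · -- s ∈ [-c, -log c]
    have hmem : s ∈ Set.Icc (-c) (-Real.log c) := Set.mem_Icc.mpr ⟨hs, h'.le⟩
    have hseg : s ∈ segment ℝ (-c) (-Real.log c) := by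
      rw [segment_eq_Icc (by linarith : -c ≤ -Real.log c)]
      exact hmem
    have := hconc.ge_on_segment (Set.mem_Icc.mpr ⟨le_refl _, by linarith⟩)
      (Set.mem_Icc.mpr ⟨by linarith, le_refl _⟩) hseg
    have hgl : 0 ≤ g (-Real.log c) := hmidnn _ (le_refl _) (by have := Real.log_nonneg hc; linarith)
    have hmin : (0:ℝ) ≤ min (g (-c)) (g (-Real.log c)) := le_min hgc hgl
    have : 0 ≤ g s := le_trans hmin this
    simp only [hg] at this; linarith
lemma core_tpc (σ P A c t ω : ℝ) (hσ : 0 < σ) (hP : 0 < P) (hA0 : 0 < A) (hc1 : 1 ≤ c)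
    (h2P : 2 * P = A * Real.exp c * (2 - c)) (hPA : P ≤ A) (hω : 0 < ω)
    (htω : t = 2 * ω * σ) :
    (A - P * Real.exp (-c)) / (2 * P * (c / (2 * σ)) ^ 2 * Real.exp (-c)) ≤
      (A - P * Real.exp (-t)) / (2 * P * ω ^ 2 * Real.exp (-t)) := by
  have hc0 : 0 < c := lt_of_lt_of_le one_pos hc1
  have hX : (0:ℝ) < Real.exp c := Real.exp_pos c
  have hY : (0:ℝ) < Real.exp t := Real.exp_pos t
  have ht0 : 0 < t := by rw [htω]; positivity
  have hc2 : c < 2 := by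
    by_contra h
    push_neg at h
    have : A * Real.exp c * (2 - c) ≤ 0 :=
      mul_nonpos_of_nonneg_of_nonpos (by positivity) (by linarith)
    linarith
  have h2e : 2 - c ≤ 2 * Real.exp (-c) := by
    rw [Real.exp_neg]
    have h1 : (2 - c) * Real.exp c ≤ 2 := by nlinarith [h2P, hA0, hPA]
    calc 2 - c = (2 - c) * Real.exp c * (Real.exp c)⁻¹ := by field_simp
    _ ≤ 2 * (Real.exp c)⁻¹ := mul_le_mul_of_nonneg_right h1 (by positivity)
  have hk : (t - c) ^ 2 ≤ 2 * c * (Real.exp (t - c) - 1 - (t - c)) :=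
    key_ineq c hc1 h2e (t - c) (by linarith)
  have hk2 : Real.exp c * t ^ 2 + Real.exp c * (2 - c) * c ≤ 2 * c * Real.exp t := by
    rw [Real.exp_sub] at hk
    have h3 := mul_le_mul_of_nonneg_left hk hX.le
    have h4 : Real.exp c * (2 * c * (Real.exp t / Real.exp c - 1 - (t - c))) =
        2 * c * Real.exp t - Real.exp c * (2 * c) - Real.exp c * (2 * c * (t - c)) := by
      field_simp
    rw [h4] at h3
    nlinarith [h3]
  have h1 : (A * Real.exp c - P) * t ^ 2 ≤ (A * Real.exp t - P) * c ^ 2 := by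
    have key2 : (A * Real.exp t - P) * c ^ 2 - (A * Real.exp c - P) * t ^ 2 =
        (A * c / 2) * (2 * c * Real.exp t -
          (Real.exp c * t ^ 2 + Real.exp c * (2 - c) * c)) := by
      linear_combination (t ^ 2 / 2 - c ^ 2 / 2) * h2P
    have hnn : 0 ≤ (A * c / 2) * (2 * c * Real.exp t -
        (Real.exp c * t ^ 2 + Real.exp c * (2 - c) * c)) :=
      mul_nonneg (by positivity) (by linarith)
    linarith [key2, hnn]
  have hd1 : 0 < 2 * P * (c / (2 * σ)) ^ 2 * Real.exp (-c) := by
    have : (0:ℝ) < c / (2 * σ) := div_pos hc0 (by linarith)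
    positivity
  have hd2 : 0 < 2 * P * ω ^ 2 * Real.exp (-t) := by positivity
  rw [div_le_div_iff₀ hd1 hd2, Real.exp_neg, Real.exp_neg]
  have hωt : ω ^ 2 = t ^ 2 / (4 * σ ^ 2) := by rw [htω]; field_simp; ring
  rw [hωt]
  have hXne : Real.exp c ≠ 0 := ne_of_gt hX
  have hYne : Real.exp t ≠ 0 := ne_of_gt hY
  have hσne : σ ≠ 0 := ne_of_gt hσ
  have eL : (A - P * (Real.exp c)⁻¹) * (2 * P * (t ^ 2 / (4 * σ ^ 2)) * (Real.exp t)⁻¹)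
      = ((A * Real.exp c - P) * t ^ 2) * (P / (2 * σ ^ 2) / (Real.exp c * Real.exp t)) := by
    field_simp
    ring
  have eR : (A - P * (Real.exp t)⁻¹) * (2 * P * (c / (2 * σ)) ^ 2 * (Real.exp c)⁻¹)
      = ((A * Real.exp t - P) * c ^ 2) * (P / (2 * σ ^ 2) / (Real.exp c * Real.exp t)) := by
    field_simp
  rw [eL, eR]
  exact mul_le_mul_of_nonneg_right h1 (by positivity)

theorem cauchy_asv_min_tpc (σ P σν2 : ℝ) (hσ : 0 < σ) (hP : 0 < P) (hν : 0 < σν2)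
    (w : ℝ) (hw : w * Real.exp w = -2 * P / (Real.exp 2 * (P + σν2))) (hw1 : -1 ≤ w) :
    ∀ ω : ℝ, 0 < ω →
      (P + σν2 - P * Real.exp (-2 * ((2 + w) / (2 * σ)) * σ)) /
          (2 * P * ((2 + w) / (2 * σ))^2 * Real.exp (-2 * ((2 + w) / (2 * σ)) * σ)) ≤
        (P + σν2 - P * Real.exp (-2 * ω * σ)) /
          (2 * P * ω^2 * Real.exp (-2 * ω * σ)) := by
  intro ω hω
  have hσne : σ ≠ 0 := ne_of_gt hσ
  have he1 : -2 * ((2 + w) / (2 * σ)) * σ = -(2 + w) := by field_simp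
  have he2 : -2 * ω * σ = -(2 * ω * σ) := by ring
  rw [he1, he2]
  have hne : Real.exp 2 * (P + σν2) ≠ 0 := by positivity
  rw [eq_div_iff hne] at hw
  have h2P : 2 * P = (P + σν2) * Real.exp (2 + w) * (2 - (2 + w)) := by
    rw [Real.exp_add]; linear_combination hw
  exact core_tpc σ P (P + σν2) (2 + w) (2 * ω * σ) ω hσ hP (by positivity) (by linarith)
    h2P (by linarith) hω rfl
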